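/- For every n ≥ 1 and every t ∈ [−1,1]^n, the two members of ℓ⁺_n(t) are boxes contained in [−1,1]^{n+1} and their interiors are disjoint; moreover all interval endpoints depend continuously on t, so ℓ⁺_n defines a continuous map from [−1,1]^n to the space of configurations of two little (n+1)-cubes. -/

import Mathlib

/-- The closed box in `ℝ^m` with lower endpoint vector `a` and upper endpoint vector `b`. -/
def RBox {m : ℕ} (a b : Fin m → ℝ) : Set (Fin m → ℝ) :=
  Set.univ.pi fun i => Set.Icc (a i) (b i)

/-- The ambient cube `[-1,1]^m`. -/
def unitCube (m : ℕ) : Set (Fin m → ℝ) := RBox (fun _ => -1) (fun _ => 1)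

/-- `M = max_{1 ≤ j ≤ n} |2 t_j|`. -/
noncomputable def lM {k : ℕ} (t : Fin k → ℝ) : ℝ :=
  Finset.fold max 0 (fun j => |2 * t j|) Finset.univ

/-- Lower endpoint vector of the first box of `ℓ⁺_n(t)`:
`[(1-M)/4, (3-M)/4] × ∏_i [(-1-2t_i)/4, (1-2t_i)/4]`. -/
noncomputable def loopLo₁ {k : ℕ} (t : Fin k → ℝ) : Fin (k+1) → ℝ :=
  Fin.cons ((1 - lM t) / 4) fun i => (-1 - 2 * t i) / 4

/-- Upper endpoint vector of the first box of `ℓ⁺_n(t)`. -/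
noncomputable def loopHi₁ {k : ℕ} (t : Fin k → ℝ) : Fin (k+1) → ℝ :=
  Fin.cons ((3 - lM t) / 4) fun i => (1 - 2 * t i) / 4

/-- Lower endpoint vector of the second box of `ℓ⁺_n(t)`:
`[(-3+M)/4, (-1+M)/4] × ∏_i [(-1+2t_i)/4, (1+2t_i)/4]`. -/
noncomputable def loopLo₂ {k : ℕ} (t : Fin k → ℝ) : Fin (k+1) → ℝ :=
  Fin.cons ((-3 + lM t) / 4) fun i => (-1 + 2 * t i) / 4

/-- Upper endpoint vector of the second box of `ℓ⁺_n(t)`. -/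
noncomputable def loopHi₂ {k : ℕ} (t : Fin k → ℝ) : Fin (k+1) → ℝ :=
  Fin.cons ((-1 + lM t) / 4) fun i => (1 + 2 * t i) / 4

lemma lM_nonneg {k : ℕ} (t : Fin k → ℝ) : 0 ≤ lM t :=
  (Finset.le_fold_max _).mpr (Or.inl le_rfl)

lemma le_lM {k : ℕ} (t : Fin k → ℝ) (j : Fin k) : |2 * t j| ≤ lM t :=
  (Finset.le_fold_max _).mpr (Or.inr ⟨j, Finset.mem_univ j, le_rfl⟩)

lemma lM_le {k : ℕ} (t : Fin k → ℝ) (c : ℝ) (hc : 0 ≤ c) (h : ∀ j, |2 * t j| ≤ c) :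
    lM t ≤ c := (Finset.fold_max_le _).mpr ⟨hc, fun j _ => h j⟩

lemma lM_exists {k : ℕ} (t : Fin k → ℝ) (h1 : 1 ≤ lM t) : ∃ j, lM t ≤ |2 * t j| := by
  rcases (Finset.le_fold_max _).mp (le_refl (lM t)) with h | ⟨j, _, hj⟩
  · linarith
  · exact ⟨j, hj⟩

@[fun_prop]
lemma lM_cont {k : ℕ} : Continuous fun u : Fin k → ℝ => lM u := by
  unfold lM
  induction (Finset.univ : Finset (Fin k)) using Finset.induction_on with
  | empty => simpa using continuous_const
  | insert _ _ h ih =>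
    simp only [Finset.fold_insert h]
    exact Continuous.max ((continuous_abs).comp (by continuity)) ih

/-- For every `n ≥ 1` (here `n = m + 1`) and every `t ∈ [-1,1]^n`, the two
members of `ℓ⁺_n(t)` are boxes contained in `[-1,1]^{n+1}` with disjoint interiors, and all
interval endpoints depend continuously on `t`; so `ℓ⁺_n` is a continuous map from `[-1,1]^n`
to the space of configurations of two little `(n+1)`-cubes. -/
theorem stmt9 (m : ℕ) (t : Fin (m+1) → ℝ) (ht : ∀ j, t j ∈ Set.Icc (-1 : ℝ) 1) :
    (∀ i, loopLo₁ t i < loopHi₁ t i) ∧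
    (∀ i, loopLo₂ t i < loopHi₂ t i) ∧
    RBox (loopLo₁ t) (loopHi₁ t) ⊆ unitCube (m+2) ∧
    RBox (loopLo₂ t) (loopHi₂ t) ⊆ unitCube (m+2) ∧
    Disjoint (interior (RBox (loopLo₁ t) (loopHi₁ t)))
      (interior (RBox (loopLo₂ t) (loopHi₂ t))) ∧
    Continuous (fun u : Fin (m+1) → ℝ =>
      (loopLo₁ u, loopHi₁ u, loopLo₂ u, loopHi₂ u)) := by

  have hM0 := lM_nonneg t
  have hM2 : lM t ≤ 2 := lM_le t 2 (by norm_num) (fun j => by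
    have := (ht j).1; have := (ht j).2
    rw [abs_le]; constructor <;> linarith)
  have hbd : ∀ j, -1 ≤ t j ∧ t j ≤ 1 := fun j => ⟨(ht j).1, (ht j).2⟩
  refine ⟨?_, ?_, ?_, ?_, ?_, ?_⟩
  · intro i
    induction i using Fin.cases with
    | zero => simp [loopLo₁, loopHi₁]; linarith
    | succ i => simp [loopLo₁, loopHi₁]; linarith
  · intro i
    induction i using Fin.cases with
    | zero => simp [loopLo₂, loopHi₂]; linarith
    | succ i => simp [loopLo₂, loopHi₂]; linarith
  · intro x hx i _
    have h := hx i (Set.mem_univ i)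
    simp only [Set.mem_Icc]
    induction i using Fin.cases with
    | zero =>
      simp [loopLo₁, loopHi₁] at h; constructor <;> linarith [h.1, h.2]
    | succ i =>
      simp [loopLo₁, loopHi₁] at h
      obtain ⟨h1, h2⟩ := hbd i; constructor <;> linarith [h.1, h.2]
  · intro x hx i _
    have h := hx i (Set.mem_univ i)
    simp only [Set.mem_Icc]
    induction i using Fin.cases with
    | zero =>
      simp [loopLo₂, loopHi₂] at h; constructor <;> linarith [h.1, h.2]
    | succ i =>
      simp [loopLo₂, loopHi₂] at h
      obtain ⟨h1, h2⟩ := hbd i; constructor <;> linarith [h.1, h.2]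
  · rw [Set.disjoint_left]
    intro x hx1 hx2
    rw [RBox, interior_pi_set Set.finite_univ] at hx1 hx2
    simp only [Function.comp, interior_Icc] at hx1 hx2
    by_cases hM1 : lM t ≤ 1
    · have h1 := hx1 0 (Set.mem_univ 0)
      have h2 := hx2 0 (Set.mem_univ 0)
      simp [loopLo₁, loopHi₁, loopLo₂, loopHi₂] at h1 h2
      linarith [h1.1, h2.2]
    · obtain ⟨j, hj⟩ := lM_exists t (le_of_not_ge hM1)
      have h1 := hx1 j.succ (Set.mem_univ _)
      have h2 := hx2 j.succ (Set.mem_univ _)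
      simp [loopLo₁, loopHi₁, loopLo₂, loopHi₂] at h1 h2
      rcases le_or_gt 0 (t j) with h | h
      · have : 2 * t j ≥ 1 := by
          have := hj; rw [abs_of_nonneg (by linarith)] at this; linarith
        linarith [h1.2, h2.1]
      · have : 2 * t j ≤ -1 := by
          have := hj; rw [abs_of_neg (by linarith)] at this; linarith
        linarith [h1.1, h2.2]
  · refine Continuous.prodMk ?_ (Continuous.prodMk ?_ (Continuous.prodMk ?_ ?_)) <;>
    · apply continuous_pi
      intro i
      induction i using Fin.cases with
      | zero =>
        simp only [loopLo₁, loopHi₁, loopLo₂, loopHi₂, Fin.cons_zero]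
        fun_prop
      | succ i =>
        simp only [loopLo₁, loopHi₁, loopLo₂, loopHi₂, Fin.cons_succ]
        fun_prop
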